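/- Let d ≥ 0 and g ≥ 1, and let φ_1, …, φ_g ∈ ℂ[[X_1,…,X_d,U_1,…,U_g]] be formal power series such that for each i the image of φ_i under the substitution X_1 = ⋯ = X_d = 0 (the natural map to ℂ[[U_1,…,U_g]]) equals U_i. Then there exist ε_1, …, ε_g ∈ ℂ[[X_1,…,X_d]] with zero constant term such that the ideals (φ_1, …, φ_g) and (U_1 − ε_1, …, U_g − ε_g) of ℂ[[X_1,…,X_d,U_1,…,U_g]] coincide. -/

import Mathlib

/-- Setting the `X`-variables to `0`: the natural map
`ℂ[[X₁,…,X_d,U₁,…,U_g]] → ℂ[[U₁,…,U_g]]`. -/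
noncomputable def setXToZero (d g : ℕ) (φ : MvPowerSeries (Fin d ⊕ Fin g) ℂ) :
    MvPowerSeries (Fin g) ℂ :=
  fun m => MvPowerSeries.coeff (m.embDomain (.inr : Fin g ↪ Fin d ⊕ Fin g)) φ

noncomputable section Stmt17Aux

open MvPowerSeries Finsupp Classical

variable {d g : ℕ}

/-- abbreviation for the big ring -/
local notation "RR" => MvPowerSeries (Fin d ⊕ Fin g) ℂ
local notation "MM" => (Fin d ⊕ Fin g) →₀ ℕ

/-- the exponent of a `U`-variable -/
def eU (j : Fin g) : (Fin d ⊕ Fin g) →₀ ℕ := Finsupp.single (Sum.inr j) 1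

/-- total degree in the `X`-variables -/
def wX (m : (Fin d ⊕ Fin g) →₀ ℕ) : ℕ := ∑ l : Fin d, m (Sum.inl l)

lemma wX_add (p q : MM) : wX (p + q) = wX p + wX q := by
  simp [wX, Finsupp.add_apply, Finset.sum_add_distrib]

lemma wX_add_eU (m : MM) (j : Fin g) : wX (m + eU j) = wX m := by
  simp [wX, eU, Finsupp.add_apply, Finsupp.single_apply]

lemma wX_tsub_eU (m : MM) (j : Fin g) : wX (m - eU j) = wX m := by
  simp [wX, eU, Finsupp.tsub_apply, Finsupp.single_apply]

lemma wX_eq_zero {m : MM} (h : wX m = 0) (l : Fin d) : m (Sum.inl l) = 0 := by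
  have := (Finset.sum_eq_zero_iff.mp h) l (Finset.mem_univ l)
  exact this

/-- `m` is free of the `U`-variables -/
def UFreeM (m : MM) : Prop := ∀ j : Fin g, m (Sum.inr j) = 0

/-- a power series supported on `X`-monomials -/
def UFree (f : RR) : Prop := ∀ m : MM, MvPowerSeries.coeff m f ≠ 0 → UFreeM m

/-- `X`-adic order is at least `n` -/
def OX (n : ℕ) (f : RR) : Prop := ∀ m : MM, MvPowerSeries.coeff m f ≠ 0 → n ≤ wX m

lemma OX_zero (n : ℕ) : OX n (0 : RR) := by intro m hm; simp at hm

lemma OX_mono {n k : ℕ} {f : RR} (h : OX n f) (hk : k ≤ n) : OX k f :=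
  fun m hm => le_trans hk (h m hm)

lemma OX_sum {n : ℕ} {ι : Type*} (t : Finset ι) (f : ι → RR) (h : ∀ i ∈ t, OX n (f i)) :
    OX n (∑ i ∈ t, f i) := by
  intro m hm
  rw [map_sum] at hm
  obtain ⟨i, hi, hne⟩ := Finset.exists_ne_zero_of_sum_ne_zero hm
  exact h i hi m hne

lemma OX_mul {p q : ℕ} {f h : RR} (hf : OX p f) (hh : OX q h) : OX (p + q) (f * h) := by
  intro m hm
  rw [MvPowerSeries.coeff_mul] at hm
  obtain ⟨x, hx, hne⟩ := Finset.exists_ne_zero_of_sum_ne_zero hm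
  rw [Finset.HasAntidiagonal.mem_antidiagonal] at hx
  have h1 := hf x.1 (left_ne_zero_of_mul hne)
  have h2 := hh x.2 (right_ne_zero_of_mul hne)
  rw [← hx, wX_add]
  omega

lemma coeff_X_mul' (s : Fin d ⊕ Fin g) (f : RR) (m : MM) :
    MvPowerSeries.coeff m (X s * f)
      = if Finsupp.single s 1 ≤ m then MvPowerSeries.coeff (m - Finsupp.single s 1) f else 0 := by
  rw [X_def, coeff_monomial_mul]
  split_ifs <;> simp

lemma OX_X_mul {n : ℕ} {f : RR} (j : Fin g) (hf : OX n f) : OX n (X (Sum.inr j) * f) := by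
  intro m hm
  rw [coeff_X_mul'] at hm
  split_ifs at hm with h
  · have := hf _ hm
    rwa [show (m - Finsupp.single (Sum.inr j) 1) = m - eU j from rfl, wX_tsub_eU] at this
  · exact absurd rfl hm
variable (hg : 0 < g)

/-- select the smallest `U`-variable occurring in `m` (junk value if none) -/
def sel (hg : 0 < g) (m : MM) : Fin g :=
  if h : (Finset.univ.filter fun j : Fin g => m (Sum.inr j) ≠ 0).Nonempty
  then (Finset.univ.filter fun j : Fin g => m (Sum.inr j) ≠ 0).min' h else ⟨0, hg⟩

lemma sel_mem {m : MM} (h : ¬ UFreeM m) : m (Sum.inr (sel hg m)) ≠ 0 := by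
  obtain ⟨j, hj⟩ : ∃ j, m (Sum.inr j) ≠ 0 := by
    by_contra hc; push_neg at hc; exact h hc
  have hne : (Finset.univ.filter fun j : Fin g => m (Sum.inr j) ≠ 0).Nonempty :=
    ⟨j, by simp [hj]⟩
  rw [sel, dif_pos hne]
  have := Finset.min'_mem _ hne
  simpa using this

/-- the `U`-free part of a power series -/
def Puf (f : RR) : RR := fun m => if UFreeM m then f m else 0

lemma coeff_Puf (f : RR) (m : MM) :
    MvPowerSeries.coeff m (Puf f) = if UFreeM m then MvPowerSeries.coeff m f else 0 := rfl

lemma UFree_Puf (f : RR) : UFree (Puf f) := by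
  intro m hm
  rw [coeff_Puf] at hm
  by_contra h
  rw [if_neg h] at hm
  exact hm rfl

lemma OX_Puf {n : ℕ} {f : RR} (hf : OX n f) : OX n (Puf f) := by
  intro m hm
  rw [coeff_Puf] at hm
  split_ifs at hm with h
  · exact hf m hm
  · exact absurd rfl hm

/-- canonical quotient upon division of (the non-`U`-free part of) `f` by the variable
`U_{sel}` -/
def hdiv (hg : 0 < g) (j : Fin g) (f : RR) : RR :=
  fun m => if sel hg (m + eU j) = j then f (m + eU j) else 0

lemma coeff_hdiv (j : Fin g) (f : RR) (m : MM) :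
    MvPowerSeries.coeff m (hdiv hg j f)
      = if sel hg (m + eU j) = j then MvPowerSeries.coeff (m + eU j) f else 0 := rfl

lemma OX_hdiv {n : ℕ} {f : RR} (j : Fin g) (hf : OX n f) : OX n (hdiv hg j f) := by
  intro m hm
  rw [coeff_hdiv] at hm
  split_ifs at hm with h
  · have := hf _ hm; rwa [wX_add_eU] at this
  · exact absurd rfl hm

lemma eU_le_iff (m : MM) (j : Fin g) : eU j ≤ m ↔ m (Sum.inr j) ≠ 0 := by
  rw [eU, Finsupp.single_le_iff]; omega

lemma decomp (f : RR) : f = Puf f + ∑ j : Fin g, X (Sum.inr j) * hdiv hg j f := by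
  ext m
  rw [map_add, map_sum, coeff_Puf]
  by_cases hm : UFreeM m
  · rw [if_pos hm]
    have : ∀ j ∈ Finset.univ, MvPowerSeries.coeff m (X (Sum.inr j) * hdiv hg j f) = 0 := by
      intro j _
      rw [coeff_X_mul', if_neg]
      rw [show (Finsupp.single (Sum.inr j) 1 : MM) = eU j from rfl, eU_le_iff]
      simpa using hm j
    rw [Finset.sum_eq_zero this, add_zero]
  · rw [if_neg hm, zero_add]
    set j0 := sel hg m with hj0
    have hj0mem : m (Sum.inr j0) ≠ 0 := sel_mem hg hm
    have hle : eU j0 ≤ m := (eU_le_iff m j0).mpr hj0mem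
    rw [Finset.sum_eq_single j0]
    · rw [coeff_X_mul', if_pos (by exact hle), coeff_hdiv,
        show (m - Finsupp.single (Sum.inr j0) 1 : MM) = m - eU j0 from rfl,
        tsub_add_cancel_of_le hle, if_pos hj0.symm]
    · intro j _ hjne
      rw [coeff_X_mul']
      split_ifs with h
      · have h' : eU j ≤ m := h
        rw [coeff_hdiv,
          show (m - Finsupp.single (Sum.inr j) 1 : MM) = m - eU j from rfl,
          tsub_add_cancel_of_le h', if_neg]
        rw [← hj0]; exact fun hc => absurd hc.symm hjne
      · rfl
    · intro h; exact absurd (Finset.mem_univ j0) h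
/-- iterated remainders in the division procedure -/
def Fiter (hg : 0 < g) (θ : Fin g → RR) (f : RR) : ℕ → RR
  | 0 => f
  | (k+1) => ∑ j : Fin g, θ j * hdiv hg j (Fiter hg θ f k)

lemma OX_Fiter (θ : Fin g → RR) (hθ : ∀ j, OX 1 (θ j)) (f : RR) (k : ℕ) :
    OX k (Fiter hg θ f k) := by
  induction k with
  | zero => intro m _; exact Nat.zero_le _
  | succ k ih =>
      refine OX_sum _ _ (fun j _ => ?_)
      have := OX_mul (hθ j) (OX_hdiv hg j ih)
      rwa [add_comm] at this

lemma telescope (θ : Fin g → RR) (f : RR) (K : ℕ) :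
    f = (∑ k ∈ Finset.range K, Puf (Fiter hg θ f k))
      + (∑ j : Fin g, (X (Sum.inr j) - θ j) * ∑ k ∈ Finset.range K, hdiv hg j (Fiter hg θ f k))
      + Fiter hg θ f K := by
  induction K with
  | zero => simp [Fiter]
  | succ K ih =>
      have hdec := decomp hg (Fiter hg θ f K)
      have hnext : Fiter hg θ f (K+1) = ∑ j : Fin g, θ j * hdiv hg j (Fiter hg θ f K) := rfl
      rw [Finset.sum_range_succ]
      conv_lhs => rw [ih]
      simp only [Finset.sum_range_succ, mul_add, Finset.sum_add_distrib, hnext]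
      have : ∀ j : Fin g, (X (Sum.inr j) - θ j) * hdiv hg j (Fiter hg θ f K)
          = X (Sum.inr j) * hdiv hg j (Fiter hg θ f K) - θ j * hdiv hg j (Fiter hg θ f K) := by
        intro j; ring
      rw [Finset.sum_congr rfl (fun j _ => this j), Finset.sum_sub_distrib]
      conv_lhs => rw [hdec]
      abel

/-- **Division lemma**: modulo the ideal generated by the `U_j - θ_j`, with `θ_j` of positive
`X`-order, every power series is congruent to a `U`-free one. -/
theorem div_lemma (hg : 0 < g) (θ : Fin g → RR) (hθ : ∀ j, OX 1 (θ j)) (f : RR) :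
    ∃ (c : RR) (q : Fin g → RR), UFree c ∧
      f = c + ∑ j : Fin g, (X (Sum.inr j) - θ j) * q j := by
  set F := Fiter hg θ f with hF
  set c : RR := fun m => ∑ k ∈ Finset.range (wX m + 1), Puf (F k) m with hcdef
  set q : Fin g → RR :=
    fun j => fun m => ∑ k ∈ Finset.range (wX m + 1), hdiv hg j (F k) m with hqdef
  refine ⟨c, q, ?_, ?_⟩
  · intro m hm
    by_contra h
    apply hm
    rw [MvPowerSeries.coeff_apply]
    refine Finset.sum_eq_zero (fun k _ => ?_)
    exact if_neg h
  · ext m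
    set W := wX m with hW
    have tel := telescope hg θ f (W + 1)
    have this1 := congrArg (MvPowerSeries.coeff m) tel
    rw [map_add, map_add, map_sum, map_sum] at this1
    have hFK : MvPowerSeries.coeff m (F (W+1)) = 0 := by
      by_contra hc
      have := OX_Fiter hg θ hθ f (W+1) m hc
      omega
    rw [hFK, add_zero] at this1
    have h1 : MvPowerSeries.coeff m c
        = ∑ k ∈ Finset.range (W+1), MvPowerSeries.coeff m (Puf (F k)) := rfl
    have h2 : ∀ j : Fin g, MvPowerSeries.coeff m ((X (Sum.inr j) - θ j) * q j)
        = MvPowerSeries.coeff m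
            ((X (Sum.inr j) - θ j) * ∑ k ∈ Finset.range (W+1), hdiv hg j (F k)) := by
      intro j
      rw [MvPowerSeries.coeff_mul, MvPowerSeries.coeff_mul]
      refine Finset.sum_congr rfl (fun p hp => ?_)
      rw [Finset.HasAntidiagonal.mem_antidiagonal] at hp
      congr 1
      have hwp : wX p.2 ≤ W := by
        rw [hW, ← hp, wX_add]; omega
      have hq1 : MvPowerSeries.coeff p.2 (q j)
          = ∑ k ∈ Finset.range (wX p.2 + 1), hdiv hg j (F k) p.2 := rfl
      have hq2 : MvPowerSeries.coeff p.2 (∑ k ∈ Finset.range (W+1), hdiv hg j (F k))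
          = ∑ k ∈ Finset.range (W+1), hdiv hg j (F k) p.2 := by
        rw [map_sum]; rfl
      rw [hq1, hq2]
      refine Finset.sum_subset (by apply Finset.range_subset_range.mpr; omega) (fun k _ hk => ?_)
      rw [Finset.mem_range, not_lt] at hk
      by_contra hc
      have := OX_hdiv hg j (OX_Fiter hg θ hθ f k) p.2 hc
      omega
    rw [map_add, map_sum, h1, Finset.sum_congr rfl (fun j _ => h2 j)]
    exact this1
/-- candidate syzygy coefficients -/
def syzS (hg : 0 < g) (b : Fin g → RR) (j k : Fin g) : RR := fun ν =>
  if j = k then 0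
  else if sel hg (ν + eU j + eU k) = k then MvPowerSeries.coeff (ν + eU k) (b j)
  else if sel hg (ν + eU j + eU k) = j then -(MvPowerSeries.coeff (ν + eU j) (b k))
  else 0

lemma coeff_syzS (hg : 0 < g) (b : Fin g → RR) (j k : Fin g) (ν : MM) :
    MvPowerSeries.coeff ν (syzS hg b j k)
      = if j = k then 0
        else if sel hg (ν + eU j + eU k) = k then MvPowerSeries.coeff (ν + eU k) (b j)
        else if sel hg (ν + eU j + eU k) = j then -(MvPowerSeries.coeff (ν + eU j) (b k))
        else 0 := rfl

lemma eU_le_iff' (m : MM) (k : Fin g) : eU k ≤ m ↔ 1 ≤ m (Sum.inr k) := by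
  rw [eU, Finsupp.single_le_iff]

/-- **Syzygy lemma**: any relation among the variables `U_j` is generated by the trivial
(Koszul) ones. -/
theorem syz (hg : 0 < g) (b : Fin g → RR) (hb : ∑ j : Fin g, X (Sum.inr j) * b j = 0) :
    ∃ s : Fin g → Fin g → RR,
      (∀ j k, s j k = - s k j) ∧
      (∀ j, b j = ∑ k : Fin g, X (Sum.inr k) * s j k) ∧
      (∀ j k ν, MvPowerSeries.coeff ν (s j k) ≠ 0 →
        MvPowerSeries.coeff (ν + eU k) (b j) ≠ 0 ∨
        MvPowerSeries.coeff (ν + eU j) (b k) ≠ 0) := by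
  classical
  have hcyc : ∀ μ : MM,
      ∑ k : Fin g, (if eU k ≤ μ then MvPowerSeries.coeff (μ - eU k) (b k) else 0) = 0 := by
    intro μ
    have h0 := congrArg (MvPowerSeries.coeff μ) hb
    rw [map_sum, map_zero] at h0
    refine Eq.trans ?_ h0
    refine Finset.sum_congr rfl (fun k _ => ?_)
    exact (coeff_X_mul' (Sum.inr k) (b k) μ).symm
  refine ⟨syzS hg b, ?_, ?_, ?_⟩
  · -- skew-symmetry
    intro j k
    ext ν
    rw [map_neg, coeff_syzS, coeff_syzS]
    by_cases hjk : j = k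
    · subst hjk; simp
    · have hcomm : ν + eU k + eU j = ν + eU j + eU k := add_right_comm ν (eU k) (eU j)
      rw [if_neg hjk, if_neg (Ne.symm hjk), hcomm]
      by_cases h1 : sel hg (ν + eU j + eU k) = k
      · have h1' : ¬ (sel hg (ν + eU j + eU k) = j) := fun hc => hjk (hc.symm.trans h1)
        rw [if_pos h1, if_neg h1', if_pos h1, neg_neg]
      · rw [if_neg h1]
        by_cases h2 : sel hg (ν + eU j + eU k) = j
        · rw [if_pos h2, if_pos h2]
        · rw [if_neg h2, if_neg h2, if_neg h1, neg_zero]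
  · -- the division identity
    intro j
    ext n
    rw [map_sum]
    set μ := n + eU j with hμ
    have hμj : μ (Sum.inr j) ≠ 0 := by
      rw [hμ, Finsupp.add_apply, eU, Finsupp.single_eq_same]; omega
    have hμk : ∀ k : Fin g, k ≠ j → μ (Sum.inr k) = n (Sum.inr k) := by
      intro k hk
      rw [hμ, Finsupp.add_apply, eU, Finsupp.single_eq_of_ne (by simpa using hk)]
      omega
    have hnUF : ¬ UFreeM μ := fun h => hμj (h j)
    set j0 := sel hg μ with hj0
    have hj0mem : μ (Sum.inr j0) ≠ 0 := sel_mem hg hnUF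
    have hterm : ∀ k : Fin g, MvPowerSeries.coeff n (X (Sum.inr k) * syzS hg b j k)
        = if eU k ≤ n then MvPowerSeries.coeff (n - eU k) (syzS hg b j k) else 0 := by
      intro k
      exact coeff_X_mul' (Sum.inr k) (syzS hg b j k) n
    have hM : ∀ k : Fin g, eU k ≤ n → (n - eU k) + eU j + eU k = μ := by
      intro k hk
      rw [add_right_comm, tsub_add_cancel_of_le hk]
    by_cases hj0j : j0 = j
    · -- case: the selected variable is `U_j` itself
      have hval : ∀ k : Fin g, MvPowerSeries.coeff n (X (Sum.inr k) * syzS hg b j k)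
          = if k ≠ j ∧ eU k ≤ n then -(MvPowerSeries.coeff (μ - eU k) (b k)) else 0 := by
        intro k
        rw [hterm k]
        by_cases hk : eU k ≤ n
        · rw [if_pos hk, coeff_syzS]
          by_cases hkj : j = k
          · subst hkj
            rw [if_pos rfl, if_neg (by simp)]
          · rw [if_neg hkj, hM k hk]
            have hselk : ¬ (sel hg μ = k) := fun hc => hkj (hj0j.symm.trans (hj0.trans hc))
            rw [if_neg hselk, if_pos (hj0.symm.trans hj0j), if_pos ⟨Ne.symm hkj, hk⟩]
            congr 2
            rw [hμ, tsub_add_eq_add_tsub hk]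
        · rw [if_neg hk, if_neg (fun hc => hk hc.2)]
      rw [Finset.sum_congr rfl (fun k _ => hval k)]
      have hcycμ := hcyc μ
      rw [← Finset.sum_erase_add _ _ (Finset.mem_univ j)] at hcycμ
      have hμsubj : μ - eU j = n := by rw [hμ, add_tsub_cancel_right]
      rw [if_pos (by rw [hμ]; exact le_add_self), hμsubj] at hcycμ
      have hrest : ∀ k ∈ Finset.univ.erase j,
          (if eU k ≤ μ then MvPowerSeries.coeff (μ - eU k) (b k) else 0)
            = - (if k ≠ j ∧ eU k ≤ n then -(MvPowerSeries.coeff (μ - eU k) (b k)) else 0) := by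
        intro k hk
        have hkj : k ≠ j := Finset.ne_of_mem_erase hk
        have hcond : eU k ≤ μ ↔ eU k ≤ n := by
          rw [eU_le_iff', eU_le_iff', hμk k hkj]
        by_cases h : eU k ≤ n
        · rw [if_pos (hcond.mpr h), if_pos ⟨hkj, h⟩, neg_neg]
        · rw [if_neg (fun hc => h (hcond.mp hc)), if_neg (fun hc => h hc.2), neg_zero]
      rw [Finset.sum_congr rfl hrest, Finset.sum_neg_distrib] at hcycμ
      have : MvPowerSeries.coeff n (b j)
          = ∑ k ∈ Finset.univ.erase j, (if k ≠ j ∧ eU k ≤ n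
              then -(MvPowerSeries.coeff (μ - eU k) (b k)) else 0) := by
        linear_combination hcycμ
      rw [this]
      refine Finset.sum_subset (Finset.subset_univ _) (fun k _ hk => ?_)
      have : k = j := by simpa using hk
      rw [if_neg (fun hc => hc.1 this)]
    · -- case: the selected variable is different from `U_j`
      have hj0n : eU j0 ≤ n := by
        rw [eU_le_iff']
        have := hμk j0 hj0j
        omega
      rw [Finset.sum_eq_single j0]
      · rw [hterm j0, if_pos hj0n, coeff_syzS, if_neg (fun hc => hj0j (hc.symm.trans rfl) ),
          hM j0 hj0n, if_pos (hj0.symm), tsub_add_cancel_of_le hj0n]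
      · intro k _ hkj0
        rw [hterm k]
        by_cases hk : eU k ≤ n
        · rw [if_pos hk, coeff_syzS]
          by_cases hkj : j = k
          · rw [if_pos hkj]
          · rw [if_neg hkj, hM k hk, if_neg (fun hc => hkj0 (hj0.trans hc).symm),
              if_neg (fun hc => hj0j (hj0.trans hc))]
        · rw [if_neg hk]
      · intro h; exact absurd (Finset.mem_univ j0) h
  · -- support control
    intro j k ν hne
    rw [coeff_syzS] at hne
    split_ifs at hne with h1 h2 h3
    · exact absurd rfl hne
    · left; exact hne
    · right; exact fun hc => hne (by rw [hc, neg_zero])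
    · exact absurd rfl hne
/-- the slice of a series at `X`-degree exactly `n` -/
def sliceX (n : ℕ) (f : RR) : RR := fun m => if wX m = n then f m else 0

lemma coeff_sliceX (n : ℕ) (f : RR) (m : MM) :
    MvPowerSeries.coeff m (sliceX n f)
      = if wX m = n then MvPowerSeries.coeff m f else 0 := rfl

lemma OX_sliceX (n : ℕ) (f : RR) : OX n (sliceX n f) := by
  intro m hm
  rw [coeff_sliceX] at hm
  split_ifs at hm with h
  · omega
  · exact absurd rfl hm

lemma UFree_sliceX {n : ℕ} {f : RR} (hf : UFree f) : UFree (sliceX n f) := by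
  intro m hm
  rw [coeff_sliceX] at hm
  split_ifs at hm with h
  · exact hf m hm
  · exact absurd rfl hm

lemma sliceX_eq_zero {n : ℕ} {f : RR} (hf : OX (n+1) f) : sliceX n f = 0 := by
  ext m
  rw [coeff_sliceX, map_zero]
  split_ifs with h
  · by_contra hc
    have := hf m hc
    omega
  · rfl

lemma OX_sub_sliceX {n : ℕ} {f : RR} (hf : OX n f) : OX (n+1) (f - sliceX n f) := by
  intro m hm
  have h1 : MvPowerSeries.coeff m (f - sliceX n f)
      = MvPowerSeries.coeff m f - (if wX m = n then MvPowerSeries.coeff m f else 0) := by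
    rw [map_sub, coeff_sliceX]
  rw [h1] at hm
  split_ifs at hm with h
  · simp at hm
  · have := hf m (by intro hc; rw [hc] at hm; simp at hm)
    omega

lemma sliceX_add (n : ℕ) (f h : RR) : sliceX n (f + h) = sliceX n f + sliceX n h := by
  ext m
  rw [map_add, coeff_sliceX, coeff_sliceX, coeff_sliceX, map_add]
  split_ifs <;> simp

lemma sliceX_sub (n : ℕ) (f h : RR) : sliceX n (f - h) = sliceX n f - sliceX n h := by
  ext m
  rw [map_sub, coeff_sliceX, coeff_sliceX, coeff_sliceX, map_sub]
  split_ifs <;> simp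

lemma sliceX_sum (n : ℕ) {ι : Type*} (t : Finset ι) (f : ι → RR) :
    sliceX n (∑ i ∈ t, f i) = ∑ i ∈ t, sliceX n (f i) := by
  classical
  induction t using Finset.induction with
  | empty =>
      ext m
      rw [Finset.sum_empty, Finset.sum_empty, coeff_sliceX, map_zero]
      split_ifs <;> rfl
  | insert _ _ hnot ih =>
      rw [Finset.sum_insert hnot, Finset.sum_insert hnot, sliceX_add, ih]

lemma sliceX_X_mul (n : ℕ) (j : Fin g) (f : RR) :
    sliceX n (X (Sum.inr j) * f) = X (Sum.inr j) * sliceX n f := by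
  ext m
  rw [coeff_sliceX, coeff_X_mul', coeff_X_mul']
  by_cases h : Finsupp.single (Sum.inr j) 1 ≤ m
  · rw [if_pos h, if_pos h, coeff_sliceX,
      show (m - Finsupp.single (Sum.inr j) 1 : MM) = m - eU j from rfl, wX_tsub_eU]
  · rw [if_neg h, if_neg h]
    split_ifs <;> rfl

/-- improvement step: a `U`-free element of the ideal admits representations with
coefficients of arbitrarily high `X`-order. -/
lemma improve (hg : 0 < g) (θ : Fin g → RR) (hθ : ∀ j, OX 1 (θ j)) (c : RR) (hc : UFree c)
    (n : ℕ) (a : Fin g → RR) (hca : c = ∑ j : Fin g, (X (Sum.inr j) - θ j) * a j)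
    (ha : ∀ j, OX n (a j)) :
    ∃ a' : Fin g → RR, (c = ∑ j : Fin g, (X (Sum.inr j) - θ j) * a' j)
      ∧ ∀ j, OX (n+1) (a' j) := by
  classical
  set b : Fin g → RR := fun j => sliceX n (a j) with hbdef
  -- slice the defining equation at X-degree n
  have hsplit : c = (∑ j : Fin g, X (Sum.inr j) * a j) - ∑ j : Fin g, θ j * a j := by
    rw [hca, ← Finset.sum_sub_distrib]
    exact Finset.sum_congr rfl (fun j _ => by ring)
  have hslice : sliceX n c = ∑ j : Fin g, X (Sum.inr j) * b j := by
    rw [hsplit, sliceX_sub, sliceX_sum, sliceX_sum]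
    have h1 : ∀ j : Fin g, sliceX n (θ j * a j) = 0 := by
      intro j
      apply sliceX_eq_zero
      have := OX_mul (hθ j) (ha j)
      rwa [add_comm] at this
    rw [Finset.sum_congr rfl (fun j _ => h1 j), Finset.sum_eq_zero (fun j _ => rfl), sub_zero]
    exact Finset.sum_congr rfl (fun j _ => sliceX_X_mul n j (a j))
  -- it vanishes, being both U-free and a multiple of the U's
  have hzero : ∑ j : Fin g, X (Sum.inr j) * b j = 0 := by
    ext m
    rw [map_sum, map_zero]
    by_cases hm : UFreeM m
    · refine Finset.sum_eq_zero (fun j _ => ?_)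
      rw [coeff_X_mul', if_neg]
      rw [show (Finsupp.single (Sum.inr j) 1 : MM) = eU j from rfl, eU_le_iff]
      simpa using hm j
    · have : MvPowerSeries.coeff m (sliceX n c) = 0 := by
        by_contra hcon
        exact hm (UFree_sliceX hc m hcon)
      rw [hslice, map_sum] at this
      exact this
  obtain ⟨s, hskew, hrep, hsupp⟩ := syz hg b hzero
  have hOXs : ∀ j k, OX n (s j k) := by
    intro j k ν hν
    rcases hsupp j k ν hν with h | h
    · have := OX_sliceX n (a j) _ h
      rwa [wX_add_eU] at this
    · have := OX_sliceX n (a k) _ h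
      rwa [wX_add_eU] at this
  refine ⟨fun j => (a j - b j) + ∑ k : Fin g, θ k * s j k, ?_, ?_⟩
  · -- the corrected representation still works
    have hkey : ∀ j : Fin g, b j - ∑ k : Fin g, θ k * s j k
        = ∑ k : Fin g, (X (Sum.inr k) - θ k) * s j k := by
      intro j
      rw [hrep j, ← Finset.sum_sub_distrib]
      exact Finset.sum_congr rfl (fun k _ => by ring)
    have hD : ∑ j : Fin g, (X (Sum.inr j) - θ j) * ∑ k : Fin g, (X (Sum.inr k) - θ k) * s j k
        = 0 := by
      set A : Fin g → RR := fun j => X (Sum.inr j) - θ j with hA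
      have e1 : ∑ j : Fin g, A j * ∑ k : Fin g, A k * s j k
          = ∑ j : Fin g, ∑ k : Fin g, A j * (A k * s j k) := by
        exact Finset.sum_congr rfl (fun j _ => Finset.mul_sum _ _ _)
      set D := ∑ j : Fin g, ∑ k : Fin g, A j * (A k * s j k) with hDdef
      have e2 : D = - D := by
        calc D = ∑ j : Fin g, ∑ k : Fin g, A j * (A k * s j k) := hDdef
        _ = ∑ k : Fin g, ∑ j : Fin g, A j * (A k * s j k) := Finset.sum_comm
        _ = ∑ k : Fin g, ∑ j : Fin g, -(A k * (A j * s k j)) := by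
            refine Finset.sum_congr rfl (fun k _ => Finset.sum_congr rfl (fun j _ => ?_))
            rw [hskew j k]; ring
        _ = -∑ k : Fin g, ∑ j : Fin g, A k * (A j * s k j) := by
            rw [← Finset.sum_neg_distrib]
            exact Finset.sum_congr rfl (fun k _ => Finset.sum_neg_distrib _)
        _ = - D := by rw [hDdef]
      have e3 : D = 0 := by
        have h2 : D + D = 0 := by linear_combination e2
        ext m
        have h3 := congrArg (MvPowerSeries.coeff m) h2
        rw [map_add, map_zero] at h3
        rw [map_zero]
        exact add_self_eq_zero.mp h3
      rw [e1, e3]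
    rw [hca]
    have : ∀ j : Fin g, (X (Sum.inr j) - θ j) * ((a j - b j) + ∑ k : Fin g, θ k * s j k)
        = (X (Sum.inr j) - θ j) * a j
          - (X (Sum.inr j) - θ j) * (b j - ∑ k : Fin g, θ k * s j k) := by
      intro j; ring
    rw [Finset.sum_congr rfl (fun j _ => this j), Finset.sum_sub_distrib]
    have hkey2 : ∀ j : Fin g, (X (Sum.inr j) - θ j) * (b j - ∑ k : Fin g, θ k * s j k)
        = (X (Sum.inr j) - θ j) * ∑ k : Fin g, (X (Sum.inr k) - θ k) * s j k :=
      fun j => by rw [hkey j]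
    rw [Finset.sum_congr rfl (fun j _ => hkey2 j), hD, sub_zero]
  · -- order increases
    intro j
    have h1 : OX (n+1) (a j - b j) := OX_sub_sliceX (ha j)
    have h2 : OX (n+1) (∑ k : Fin g, θ k * s j k) := by
      refine OX_sum _ _ (fun k _ => ?_)
      have := OX_mul (hθ k) (hOXs j k)
      rwa [add_comm] at this
    intro m hm
    rw [map_add] at hm
    by_cases hc1 : MvPowerSeries.coeff m (a j - b j) = 0
    · rw [hc1, zero_add] at hm
      exact h2 m hm
    · exact h1 m hc1

/-- **Key lemma**: a `U`-free element of the ideal `(U_j - θ_j)` is zero. -/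
theorem crux (hg : 0 < g) (θ : Fin g → RR) (hθ : ∀ j, OX 1 (θ j)) (c : RR) (hc : UFree c)
    (a : Fin g → RR) (hca : c = ∑ j : Fin g, (X (Sum.inr j) - θ j) * a j) : c = 0 := by
  have main : ∀ n : ℕ, ∃ a' : Fin g → RR,
      (c = ∑ j : Fin g, (X (Sum.inr j) - θ j) * a' j) ∧ ∀ j, OX n (a' j) := by
    intro n
    induction n with
    | zero => exact ⟨a, hca, fun j m _ => Nat.zero_le _⟩
    | succ n ih =>
        obtain ⟨a', h1, h2⟩ := ih
        exact improve hg θ hθ c hc n a' h1 h2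
  have hOXc : ∀ n, OX n c := by
    intro n
    obtain ⟨a', h1, h2⟩ := main n
    rw [h1]
    refine OX_sum _ _ (fun j _ => ?_)
    have := OX_mul (fun m _ => Nat.zero_le _ : OX 0 (X (Sum.inr j) - θ j)) (h2 j)
    rwa [zero_add] at this
  ext m
  rw [map_zero]
  by_contra hcon
  have := hOXc (wX m + 1) m hcon
  omega
lemma coeff_inr_only (φf : RR) (m : MM)
    (hm : ∀ l : Fin d, m (Sum.inl l) = 0) :
    MvPowerSeries.coeff m φf
      = MvPowerSeries.coeff
          (Finsupp.equivFunOnFinite.symm (fun k => m (Sum.inr k)) : Fin g →₀ ℕ)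
          (setXToZero d g φf) := by
  have hme : m = Finsupp.embDomain (.inr : Fin g ↪ Fin d ⊕ Fin g)
      (Finsupp.equivFunOnFinite.symm (fun k => m (Sum.inr k))) := by
    ext s
    cases s with
    | inl l =>
        rw [Finsupp.embDomain_notin_range]
        · exact hm l
        · simp [Function.Embedding.inr]
    | inr k =>
        have h := Finsupp.embDomain_apply_self (Function.Embedding.inr : Fin g ↪ Fin d ⊕ Fin g)
          (Finsupp.equivFunOnFinite.symm fun k => m (Sum.inr k)) k
        rw [Function.Embedding.inr_apply] at h
        rw [h]
        simp
  conv_lhs => rw [hme]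
  rfl

lemma OX_theta (φ : Fin g → MvPowerSeries (Fin d ⊕ Fin g) ℂ)
    (hφ : ∀ i, setXToZero d g (φ i) = MvPowerSeries.X i) (j : Fin g) :
    OX 1 (X (Sum.inr j) - φ j : RR) := by
  intro m hm
  by_contra hcon
  apply hm
  have hw : wX m = 0 := by omega
  have hml : ∀ l : Fin d, m (Sum.inl l) = 0 := wX_eq_zero hw
  set m' : Fin g →₀ ℕ := Finsupp.equivFunOnFinite.symm (fun k => m (Sum.inr k)) with hm'
  have h1 : MvPowerSeries.coeff m (φ j) = MvPowerSeries.coeff m' (X j) := by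
    rw [coeff_inr_only (φ j) m hml, hφ j]
  have h2 : MvPowerSeries.coeff m (X (Sum.inr j) : RR)
      = MvPowerSeries.coeff m' (X j : MvPowerSeries (Fin g) ℂ) := by
    classical
    rw [MvPowerSeries.coeff_X, MvPowerSeries.coeff_X]
    have hemb : m = Finsupp.embDomain (.inr : Fin g ↪ Fin d ⊕ Fin g) m' := by
      ext s
      cases s with
      | inl l =>
          rw [Finsupp.embDomain_notin_range]
          · exact hml l
          · simp [Function.Embedding.inr]
      | inr k =>
          have h := Finsupp.embDomain_apply_self (Function.Embedding.inr : Fin g ↪ Fin d ⊕ Fin g)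
            m' k
          rw [Function.Embedding.inr_apply] at h
          rw [h]
          simp [hm']
    have hsingle : (Finsupp.single (Sum.inr j) 1 : MM)
        = Finsupp.embDomain (.inr : Fin g ↪ Fin d ⊕ Fin g) (Finsupp.single j 1) := by
      rw [Finsupp.embDomain_single]; rfl
    rw [hemb, hsingle]
    congr 1
    simp only [eq_iff_iff]
    exact ⟨fun h => Finsupp.embDomain_injective _ h, fun h => by rw [h]⟩
  rw [map_sub, h1, h2, sub_self]

theorem stmt_17' (d g : ℕ) (hg : 1 ≤ g)
    (φ : Fin g → MvPowerSeries (Fin d ⊕ Fin g) ℂ)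
    (hφ : ∀ i, setXToZero d g (φ i) = MvPowerSeries.X i) :
    ∃ ε : Fin g → MvPowerSeries (Fin d ⊕ Fin g) ℂ,
      (∀ i, ∀ m : Fin d ⊕ Fin g →₀ ℕ, MvPowerSeries.coeff m (ε i) ≠ 0 →
        ∀ j : Fin g, m (Sum.inr j) = 0) ∧
      (∀ i, MvPowerSeries.constantCoeff (ε i) = 0) ∧
      Ideal.span (Set.range φ)
        = Ideal.span (Set.range fun i => MvPowerSeries.X (Sum.inr i) - ε i) := by
  classical
  have hg' : 0 < g := hg
  set θ : Fin g → MvPowerSeries (Fin d ⊕ Fin g) ℂ := fun j => X (Sum.inr j) - φ j with hθdef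
  have hθ : ∀ j, OX 1 (θ j) := fun j => OX_theta φ hφ j
  have hφθ : ∀ j, X (Sum.inr j) - θ j = φ j := fun j => sub_sub_cancel _ _
  -- Step 1: divide each U_i by the φ's
  have step1 := fun i : Fin g => div_lemma hg' θ hθ (X (Sum.inr i))
  choose ε q hUF heq using step1
  have hstep1 : ∀ i, X (Sum.inr i) - ε i ∈ Ideal.span (Set.range φ) := by
    intro i
    have : X (Sum.inr i) - ε i = ∑ j : Fin g, (X (Sum.inr j) - θ j) * q i j := by
      rw [sub_eq_iff_eq_add', ← heq i]
    rw [this]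
    refine Ideal.sum_mem _ (fun j _ => ?_)
    rw [hφθ j]
    exact Ideal.mul_mem_right _ _ (Ideal.subset_span ⟨j, rfl⟩)
  -- constant coefficients
  have hconstφ : ∀ j, MvPowerSeries.constantCoeff (φ j) = 0 := by
    intro j
    rw [← MvPowerSeries.coeff_zero_eq_constantCoeff_apply]
    rw [coeff_inr_only (φ j) 0 (fun l => rfl), hφ j]
    have : (Finsupp.equivFunOnFinite.symm (fun k => (0 : (Fin d ⊕ Fin g) →₀ ℕ) (Sum.inr k)) : Fin g →₀ ℕ) = 0 := by
      ext k; simp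
    rw [this, MvPowerSeries.coeff_zero_eq_constantCoeff_apply, MvPowerSeries.constantCoeff_X]
  have hker : Ideal.span (Set.range φ)
      ≤ RingHom.ker (MvPowerSeries.constantCoeff) := by
    rw [Ideal.span_le]
    rintro x ⟨j, rfl⟩
    exact hconstφ j
  have hconstε : ∀ i, MvPowerSeries.constantCoeff (ε i) = 0 := by
    intro i
    have h1 := hker (hstep1 i)
    rw [RingHom.mem_ker, map_sub, MvPowerSeries.constantCoeff_X] at h1
    linear_combination -h1
  have hOXε : ∀ i, OX 1 (ε i) := by
    intro i m hm
    by_contra hcon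
    have hml : ∀ l : Fin d, m (Sum.inl l) = 0 := wX_eq_zero (by omega)
    have hmr : ∀ j : Fin g, m (Sum.inr j) = 0 := hUF i m hm
    have hm0 : m = 0 := by
      ext s; cases s with
      | inl l => exact hml l
      | inr j => exact hmr j
    rw [hm0, MvPowerSeries.coeff_zero_eq_constantCoeff_apply, hconstε i] at hm
    exact hm rfl
  -- Step 2: each φ_i lies in the ideal (U_j - ε_j)
  have step2 : ∀ i, φ i ∈ Ideal.span (Set.range fun j => X (Sum.inr j) - ε j) := by
    intro i
    obtain ⟨c, q', hUFc, heq2⟩ := div_lemma hg' ε hOXε (φ i)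
    have hcI : c ∈ Ideal.span (Set.range φ) := by
      have : c = φ i - ∑ j : Fin g, (X (Sum.inr j) - ε j) * q' j := by
        rw [heq2]; ring
      rw [this]
      refine Ideal.sub_mem _ (Ideal.subset_span ⟨i, rfl⟩) ?_
      exact Ideal.sum_mem _ (fun j _ => Ideal.mul_mem_right _ _ (hstep1 j))
    obtain ⟨aco, haco⟩ := Ideal.mem_span_range_iff_exists_fun.mp hcI
    have hcrep : c = ∑ j : Fin g, (X (Sum.inr j) - θ j) * aco j := by
      rw [← haco]
      exact Finset.sum_congr rfl (fun j _ => by rw [hφθ j, mul_comm])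
    have hczero : c = 0 := crux hg' θ hθ c hUFc aco hcrep
    rw [heq2, hczero, zero_add]
    exact Ideal.sum_mem _ (fun j _ => Ideal.mul_mem_right _ _ (Ideal.subset_span ⟨j, rfl⟩))
  refine ⟨ε, fun i => hUF i, hconstε, le_antisymm ?_ ?_⟩
  · rw [Ideal.span_le]
    rintro x ⟨i, rfl⟩
    exact step2 i
  · rw [Ideal.span_le]
    rintro x ⟨i, rfl⟩
    exact hstep1 i

end Stmt17Aux

/-- (Implicit function theorem style statement.) If
`φ₁, …, φ_g ∈ ℂ[[X₁,…,X_d,U₁,…,U_g]]` satisfy `φ_i(0, U) = U_i`, then there exist power series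
`ε₁, …, ε_g ∈ ℂ[[X₁,…,X_d]]` (i.e. with all exponents supported on the `X`-variables) with zero
constant term such that the ideals `(φ₁, …, φ_g)` and `(U₁ - ε₁, …, U_g - ε_g)` coincide. -/
theorem stmt_17 (d g : ℕ) (hg : 1 ≤ g)
    (φ : Fin g → MvPowerSeries (Fin d ⊕ Fin g) ℂ)
    (hφ : ∀ i, setXToZero d g (φ i) = MvPowerSeries.X i) :
    ∃ ε : Fin g → MvPowerSeries (Fin d ⊕ Fin g) ℂ,
      (∀ i, ∀ m : Fin d ⊕ Fin g →₀ ℕ, MvPowerSeries.coeff m (ε i) ≠ 0 →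
        ∀ j : Fin g, m (Sum.inr j) = 0) ∧
      (∀ i, MvPowerSeries.constantCoeff (ε i) = 0) ∧
      Ideal.span (Set.range φ)
        = Ideal.span (Set.range fun i => MvPowerSeries.X (Sum.inr i) - ε i) := by
  exact stmt_17' d g hg φ hφ
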